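/- The Hermite polynomial H_n is the specialization of the n-th ordinary Bell polynomial: H_n(x) = n! · 2^n · B_n(x, −1/4, 0, ..., 0). -/

import Mathlib

open MvPolynomial

/-- The formal power series `Σ_{k≥1} t_k z^k`, with `t_k` the variable `X k`. -/
noncomputable def bellSeries : PowerSeries (MvPolynomial ℕ ℚ) :=
  PowerSeries.mk fun j => if j = 0 then 0 else MvPolynomial.X j

/-- The ordinary Bell polynomial `B_k`: the coefficient of `z^k` in
`exp(Σ_{j≥1} t_j z^j)`. -/
noncomputable def bellPoly (k : ℕ) : MvPolynomial ℕ ℚ :=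
  ∑ n ∈ Finset.range (k + 1),
    ((Nat.factorial n : ℕ) : ℚ)⁻¹ • PowerSeries.coeff k (bellSeries ^ n)

/-- The physicists' Hermite polynomial via the Rodrigues formula. -/
noncomputable def hermiteP (n : ℕ) (x : ℝ) : ℝ :=
  (-1) ^ n * Real.exp (x ^ 2) * iteratedDeriv n (fun y => Real.exp (-y ^ 2)) x

/-- `H_n(x) = n! · 2^n · B_n(x, −1/4, 0, …)`, i.e. the Hermite polynomial is a
specialization of the `n`-th ordinary Bell polynomial at
`t₁ = x, t₂ = −1/4, t_k = 0 (k ≥ 3)`. -/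

lemma map_bellSeries (x : ℝ) :
    PowerSeries.map ((MvPolynomial.aeval
        (fun j : ℕ => if j = 1 then x else if j = 2 then (-1/4 : ℝ) else 0)
        : MvPolynomial ℕ ℚ →ₐ[ℚ] ℝ) : MvPolynomial ℕ ℚ →+* ℝ) bellSeries
      = ((Polynomial.C x * Polynomial.X + Polynomial.C (-1/4 : ℝ) * Polynomial.X ^ 2 :
          Polynomial ℝ) : PowerSeries ℝ) := by
  ext j
  rw [PowerSeries.coeff_map]
  rw [bellSeries, PowerSeries.coeff_mk, Polynomial.coeff_coe]
  rcases j with _ | _ | _ | j <;>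
    simp [Polynomial.coeff_C_mul, Polynomial.coeff_X, Polynomial.coeff_X_pow]

lemma coeff_pow_aux (x c : ℝ) (m n : ℕ) (hmn : m ≤ n) :
    ((Polynomial.C x * Polynomial.X + Polynomial.C c * Polynomial.X ^ 2) ^ m).coeff n
      = if n ≤ 2 * m then (m.choose (2 * m - n) : ℝ) * x ^ (2 * m - n) * c ^ (n - m) else 0 := by
  rw [add_pow, Polynomial.finset_sum_coeff]
  have hterm : ∀ k, k ≤ m →
      ((Polynomial.C x * Polynomial.X) ^ k * (Polynomial.C c * Polynomial.X ^ 2) ^ (m - k) *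
        (m.choose k : Polynomial ℝ)).coeff n
      = if k + 2 * (m - k) = n then x ^ k * c ^ (m - k) * (m.choose k : ℝ) else 0 := by
    intro k hk
    rw [mul_pow, mul_pow, ← Polynomial.C_pow, ← Polynomial.C_pow, ← pow_mul]
    have : (Polynomial.C (x ^ k) * Polynomial.X ^ k) * (Polynomial.C (c ^ (m - k)) *
        Polynomial.X ^ (2 * (m - k))) * (m.choose k : Polynomial ℝ)
        = Polynomial.C (x ^ k * c ^ (m - k) * (m.choose k : ℝ)) *
          Polynomial.X ^ (k + 2 * (m - k)) := by
      simp only [Polynomial.C_mul, ← Polynomial.C_eq_natCast, pow_add]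
      ring
    rw [this, Polynomial.coeff_C_mul, Polynomial.coeff_X_pow]
    by_cases hcond : k + 2 * (m - k) = n
    · rw [if_pos hcond, if_pos hcond.symm, mul_one]
    · rw [if_neg hcond, if_neg (fun hh => hcond hh.symm), mul_zero]
  rw [Finset.sum_congr rfl (fun k hk => hterm k (Finset.mem_range_succ_iff.mp hk))]
  by_cases h : n ≤ 2 * m
  · rw [if_pos h, Finset.sum_eq_single (2 * m - n)]
    · have h1 : 2 * m - n + 2 * (m - (2 * m - n)) = n := by omega
      have h2 : m - (2 * m - n) = n - m := by omega
      rw [if_pos h1, h2]; ring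
    · intro k hk hne
      have hk' := Finset.mem_range_succ_iff.mp hk
      rw [if_neg]
      intro hc
      exact hne (by omega)
    · intro hmem
      have hle : 2 * m - n ≤ m :=
        le_trans (Nat.sub_le_sub_left hmn (2 * m))
          (le_of_eq (by rw [two_mul, Nat.add_sub_cancel]))
      exact absurd (Finset.mem_range_succ_iff.mpr hle) hmem
  · rw [if_neg h]
    apply Finset.sum_eq_zero
    intro k hk
    rw [if_neg]
    have := Finset.mem_range_succ_iff.mp hk
    omega

lemma aeval_bellPoly (x : ℝ) (n : ℕ) :
    MvPolynomial.aeval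
        (fun j : ℕ => if j = 1 then x else if j = 2 then (-1/4 : ℝ) else 0) (bellPoly n)
      = ∑ m ∈ Finset.range (n + 1), ((m.factorial : ℝ))⁻¹ *
          ((Polynomial.C x * Polynomial.X + Polynomial.C (-1/4 : ℝ) * Polynomial.X ^ 2) ^ m).coeff
            n := by
  rw [bellPoly, map_sum]
  refine Finset.sum_congr rfl fun m hm => ?_
  rw [map_smul, Rat.smul_def]
  congr 1
  · push_cast; ring
  · have h1 : (MvPolynomial.aeval
        (fun j : ℕ => if j = 1 then x else if j = 2 then (-1/4 : ℝ) else 0) :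
          MvPolynomial ℕ ℚ →ₐ[ℚ] ℝ)
        ((PowerSeries.coeff n) (bellSeries ^ m))
        = PowerSeries.coeff n (PowerSeries.map ((MvPolynomial.aeval
            (fun j : ℕ => if j = 1 then x else if j = 2 then (-1/4 : ℝ) else 0) :
              MvPolynomial ℕ ℚ →ₐ[ℚ] ℝ) : MvPolynomial ℕ ℚ →+* ℝ) (bellSeries ^ m)) := by
      rw [PowerSeries.coeff_map]; rfl
    rw [h1, map_pow, map_bellSeries, ← Polynomial.coe_pow, Polynomial.coeff_coe]

lemma nat_identity (k j : ℕ) :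
    (k + 2 * j).factorial * 2 ^ (k + 2 * j) * (k + j).choose k
      = (k + j).factorial * 4 ^ j * 2 ^ (k + j) * Nat.doubleFactorial (2 * j - 1) *
        (k + 2 * j).choose k := by
  have h1 := Nat.choose_mul_factorial_mul_factorial (Nat.le_add_right k j)
  have h2 := Nat.choose_mul_factorial_mul_factorial (Nat.le_add_right k (2 * j))
  rw [Nat.add_sub_cancel_left] at h1 h2
  have h3 : (2 * j).factorial = 2 ^ j * j.factorial * Nat.doubleFactorial (2 * j - 1) := by
    cases j with
    | zero => simp [Nat.doubleFactorial]
    | succ s =>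
      rw [show 2 * (s + 1) = (2 * s + 1) + 1 by ring, Nat.factorial_eq_mul_doubleFactorial,
        show 2 * s + 1 + 1 = 2 * (s + 1) by ring, Nat.doubleFactorial_two_mul,
        show 2 * (s + 1) - 1 = 2 * s + 1 by omega]
  rw [← h1, ← h2, h3, show (4 : ℕ) = 2 * 2 from rfl, mul_pow]
  ring

lemma termwise (x : ℝ) (n m : ℕ) (h1 : n ≤ 2 * m) (h2 : m ≤ n) :
    Real.sqrt 2 ^ n * (((Polynomial.hermite n).coeff (2 * m - n) : ℤ) : ℝ) *
        (Real.sqrt 2 * x) ^ (2 * m - n)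
      = (n.factorial : ℝ) * 2 ^ n * ((m.factorial : ℝ))⁻¹ * (m.choose (2 * m - n) : ℝ) *
        x ^ (2 * m - n) * (-1/4 : ℝ) ^ (n - m) := by
  obtain ⟨k, j, rfl, rfl⟩ : ∃ k j, n = k + 2 * j ∧ m = k + j :=
    ⟨2 * m - n, n - m, by omega, by omega⟩
  rw [show 2 * (k + j) - (k + 2 * j) = k by omega, show k + 2 * j - (k + j) = j by omega]
  have hco : (((Polynomial.hermite (k + 2 * j)).coeff k : ℤ) : ℝ)
      = (-1) ^ j * (Nat.doubleFactorial (2 * j - 1) : ℝ) * ((k + 2 * j).choose k : ℝ) := by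
    rw [show k + 2 * j = 2 * j + k by ring, Polynomial.coeff_hermite_explicit]
    push_cast
    rw [show 2 * j + k = k + 2 * j by ring]
  have hpow : Real.sqrt 2 ^ (k + 2 * j) * (Real.sqrt 2 * x) ^ k
      = 2 ^ (k + j) * x ^ k := by
    rw [mul_pow, ← mul_assoc, ← pow_add, show k + 2 * j + k = 2 * (k + j) by ring, pow_mul,
      Real.sq_sqrt (by norm_num : (0:ℝ) ≤ 2)]
  have key : (((k + 2 * j).factorial : ℝ)) * 2 ^ (k + 2 * j) * ((k + j).choose k : ℝ)
      = ((k + j).factorial : ℝ) * 4 ^ j * 2 ^ (k + j) *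
        (Nat.doubleFactorial (2 * j - 1) : ℝ) * ((k + 2 * j).choose k : ℝ) := by
    exact_mod_cast congrArg (Nat.cast : ℕ → ℝ) (nat_identity k j)
  have hneg : ((-1/4 : ℝ)) ^ j = (-1) ^ j * ((4 : ℝ) ^ j)⁻¹ := by
    rw [show (-1/4 : ℝ) = -(4⁻¹) by norm_num, neg_pow, inv_pow]
  have hfac : ((k + j).factorial : ℝ) ≠ 0 := Nat.cast_ne_zero.mpr (Nat.factorial_ne_zero _)
  have h4 : ((4 : ℝ) ^ j) ≠ 0 := by positivity
  calc Real.sqrt 2 ^ (k + 2 * j) * (((Polynomial.hermite (k + 2 * j)).coeff k : ℤ) : ℝ) *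
        (Real.sqrt 2 * x) ^ k
      = ((-1) ^ j * (Nat.doubleFactorial (2 * j - 1) : ℝ) * ((k + 2 * j).choose k : ℝ)) *
        (Real.sqrt 2 ^ (k + 2 * j) * (Real.sqrt 2 * x) ^ k) := by rw [hco]; ring
    _ = ((-1) ^ j * (Nat.doubleFactorial (2 * j - 1) : ℝ) * ((k + 2 * j).choose k : ℝ)) *
        (2 ^ (k + j) * x ^ k) := by rw [hpow]
    _ = _ := by
        rw [hneg]
        field_simp
        linear_combination (-x ^ k) * key

lemma hermiteP_eq_scaled (n : ℕ) (x : ℝ) :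
    hermiteP n x = Real.sqrt 2 ^ n * Polynomial.aeval (Real.sqrt 2 * x) (Polynomial.hermite n) := by
  have hg : ContDiff ℝ n (fun y : ℝ => Real.exp (-(y ^ 2 / 2))) := by
    apply Real.contDiff_exp.comp
    exact (contDiff_id.pow 2).div_const 2 |>.neg
  have hfun : (fun y : ℝ => Real.exp (-y ^ 2)) =
      fun y => (fun t : ℝ => Real.exp (-(t ^ 2 / 2))) (Real.sqrt 2 * y) := by
    funext y
    congr 1
    rw [mul_pow, Real.sq_sqrt (by norm_num : (0:ℝ) ≤ 2)]
    ring
  have h2 : Real.sqrt 2 ^ 2 = 2 := Real.sq_sqrt (by norm_num)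
  unfold hermiteP
  rw [hfun, iteratedDeriv_comp_const_mul hg]
  simp only [iteratedDeriv_eq_iterate, Polynomial.deriv_gaussian_eq_hermite_mul_gaussian]
  have hex : Real.exp (-((Real.sqrt 2 * x) ^ 2 / 2)) = Real.exp (-x ^ 2) := by
    congr 1
    rw [mul_pow, h2]; ring
  rw [hex]
  have : Real.exp (x ^ 2) * Real.exp (-x ^ 2) = 1 := by
    rw [← Real.exp_add]; simp
  have hsign : ((-1 : ℝ) ^ n) * ((-1 : ℝ) ^ n) = 1 := by
    rw [← mul_pow]; norm_num
  calc (-1:ℝ) ^ n * Real.exp (x ^ 2) *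
      (√2 ^ n * ((-1) ^ n * (Polynomial.aeval (√2 * x)) (Polynomial.hermite n) * Real.exp (-x ^ 2)))
      = ((-1:ℝ)^n * (-1)^n) * (Real.exp (x^2) * Real.exp (-x^2)) *
        (√2 ^ n * (Polynomial.aeval (√2 * x)) (Polynomial.hermite n)) := by ring
    _ = _ := by rw [hsign, this]; ring

theorem hermiteP_eq_bell (n : ℕ) (x : ℝ) :
    hermiteP n x = (Nat.factorial n : ℝ) * 2 ^ n *
      MvPolynomial.aeval
        (fun j : ℕ => if j = 1 then x else if j = 2 then (-1/4 : ℝ) else 0)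
        (bellPoly n) := by
  rw [hermiteP_eq_scaled, aeval_bellPoly]
  have hH : (Polynomial.aeval (Real.sqrt 2 * x)) (Polynomial.hermite n)
      = ∑ k ∈ Finset.range (n + 1),
          (((Polynomial.hermite n).coeff k : ℤ) : ℝ) * (Real.sqrt 2 * x) ^ k := by
    rw [Polynomial.aeval_eq_sum_range' (n := n + 1) (by rw [Polynomial.natDegree_hermite]; omega)]
    exact Finset.sum_congr rfl fun k _ => by rw [zsmul_eq_mul]
  rw [hH, Finset.mul_sum, Finset.mul_sum]
  have hL : ∀ k ∈ Finset.range (n + 1),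
      Real.sqrt 2 ^ n * ((((Polynomial.hermite n).coeff k : ℤ) : ℝ) * (Real.sqrt 2 * x) ^ k)
      = if Even (n + k) then
          Real.sqrt 2 ^ n * (((Polynomial.hermite n).coeff k : ℤ) : ℝ) * (Real.sqrt 2 * x) ^ k
        else 0 := by
    intro k _
    by_cases h : Even (n + k)
    · rw [if_pos h]; ring
    · rw [if_neg h, Polynomial.coeff_hermite_of_odd_add (Nat.odd_iff.mpr ?_)]
      · push_cast; ring
      · rcases Nat.even_or_odd (n + k) with he | ho
        · exact absurd he h
        · exact Nat.odd_iff.mp ho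
  have hR : ∀ m ∈ Finset.range (n + 1),
      (Nat.factorial n : ℝ) * 2 ^ n * (((m.factorial : ℝ))⁻¹ *
        ((Polynomial.C x * Polynomial.X + Polynomial.C (-1/4 : ℝ) * Polynomial.X ^ 2) ^ m).coeff n)
      = if n ≤ 2 * m then
          (Nat.factorial n : ℝ) * 2 ^ n * ((m.factorial : ℝ))⁻¹ * (m.choose (2 * m - n) : ℝ) *
            x ^ (2 * m - n) * (-1/4 : ℝ) ^ (n - m)
        else 0 := by
    intro m hm
    rw [coeff_pow_aux x (-1/4) m n (Finset.mem_range_succ_iff.mp hm)]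
    split_ifs with h
    · ring
    · ring
  rw [Finset.sum_congr rfl hL, Finset.sum_congr rfl hR, ← Finset.sum_filter, ← Finset.sum_filter]
  refine Finset.sum_nbij' (fun k => (n + k) / 2) (fun m => 2 * m - n) ?_ ?_ ?_ ?_ ?_
  · intro k hk
    simp only [Finset.mem_filter, Finset.mem_range] at hk ⊢
    obtain ⟨t, ht⟩ := hk.2
    omega
  · intro m hm
    simp only [Finset.mem_filter, Finset.mem_range] at hm ⊢
    refine ⟨by omega, ⟨m, by omega⟩⟩
  · intro k hk
    simp only [Finset.mem_filter, Finset.mem_range] at hk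
    obtain ⟨t, ht⟩ := hk.2
    show 2 * ((n + k) / 2) - n = k
    omega
  · intro m hm
    simp only [Finset.mem_filter, Finset.mem_range] at hm
    show (n + (2 * m - n)) / 2 = m
    omega
  · intro k hk
    simp only [Finset.mem_filter, Finset.mem_range] at hk
    obtain ⟨t, ht⟩ := hk.2
    have h1 : n ≤ 2 * ((n + k) / 2) := by omega
    have h2 : (n + k) / 2 ≤ n := by omega
    have h' := termwise x n ((n + k) / 2) h1 h2
    rw [show 2 * ((n + k) / 2) - n = k by omega] at h'
    beta_reduce
    rw [show 2 * ((n + k) / 2) - n = k by omega]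
    exact h'
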